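/- Let A and B be self-adjoint operators on finite-dimensional real inner product spaces V and W respectively, both positive semidefinite. Then the operator A ⊗ id + id ⊗ B on V ⊗ W is positive semidefinite, and its kernel equals ker A ⊗ ker B. -/

import Mathlib

open TensorProduct in
theorem stmt_14 (V W : Type*)
    [NormedAddCommGroup V] [InnerProductSpace ℝ V] [FiniteDimensional ℝ V]
    [NormedAddCommGroup W] [InnerProductSpace ℝ W] [FiniteDimensional ℝ W]
    (A : V →ₗ[ℝ] V) (B : W →ₗ[ℝ] W)
    (hAsym : LinearMap.IsSymmetric A) (hBsym : LinearMap.IsSymmetric B)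
    (hApos : ∀ v : V, 0 ≤ inner (A v) v (𝕜 := ℝ))
    (hBpos : ∀ w : W, 0 ≤ inner (B w) w (𝕜 := ℝ))
    (Φ : LinearMap.BilinForm ℝ (V ⊗[ℝ] W))
    (hΦ : Φ = LinearMap.BilinForm.tmul
      (innerₗ V) (innerₗ W))
    (L : V ⊗[ℝ] W →ₗ[ℝ] V ⊗[ℝ] W)
    (hL : L = TensorProduct.map A LinearMap.id + TensorProduct.map LinearMap.id B) :
    (∀ x : V ⊗[ℝ] W, 0 ≤ Φ (L x) x) ∧
    LinearMap.ker L = LinearMap.range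
      (TensorProduct.map (LinearMap.ker A).subtype (LinearMap.ker B).subtype) := by
  classical
  set n := Module.finrank ℝ V with hn
  set m := Module.finrank ℝ W with hm
  let b := hAsym.eigenvectorBasis hn.symm
  let c := hBsym.eigenvectorBasis hm.symm
  let lam := hAsym.eigenvalues hn.symm
  let mu := hBsym.eigenvalues hm.symm
  -- nonnegativity of eigenvalues
  have hlam : ∀ i, 0 ≤ lam i := by
    intro i
    have := hApos (b i)
    rw [hAsym.apply_eigenvectorBasis, real_inner_smul_left,
      real_inner_self_eq_norm_sq, b.orthonormal.1 i] at this
    simpa using this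
  have hmu : ∀ j, 0 ≤ mu j := by
    intro j
    have := hBpos (c j)
    rw [hBsym.apply_eigenvectorBasis, real_inner_smul_left,
      real_inner_self_eq_norm_sq, c.orthonormal.1 j] at this
    simpa using this
  -- diagonal action on coordinates
  have hdiagA : ∀ (v : V) i, b.toBasis.repr (A v) i = lam i * b.toBasis.repr v i := by
    intro v i
    simp only [OrthonormalBasis.coe_toBasis_repr_apply]
    simpa using hAsym.eigenvectorBasis_apply_self_apply hn.symm v i
  have hdiagB : ∀ (w : W) j, c.toBasis.repr (B w) j = mu j * c.toBasis.repr w j := by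
    intro w j
    simp only [OrthonormalBasis.coe_toBasis_repr_apply]
    simpa using hBsym.eigenvectorBasis_apply_self_apply hm.symm w j
  -- kernel characterizations
  have hkerA : ∀ v, v ∈ LinearMap.ker A ↔ ∀ i, lam i ≠ 0 → b.toBasis.repr v i = 0 := by
    intro v
    rw [LinearMap.mem_ker]
    constructor
    · intro hv i hi
      have h2 := hdiagA v i
      rw [hv] at h2
      simp only [map_zero, Finsupp.coe_zero, Pi.zero_apply] at h2
      exact (mul_eq_zero.mp h2.symm).resolve_left hi
    · intro h
      apply b.toBasis.repr.injective
      ext i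
      rw [map_zero]
      simp only [Finsupp.coe_zero, Pi.zero_apply]
      rw [hdiagA v i]
      by_cases hi : lam i = 0
      · simp [hi]
      · rw [h i hi, mul_zero]
  have hkerB : ∀ w, w ∈ LinearMap.ker B ↔ ∀ j, mu j ≠ 0 → c.toBasis.repr w j = 0 := by
    intro w
    rw [LinearMap.mem_ker]
    constructor
    · intro hw j hj
      have h2 := hdiagB w j
      rw [hw] at h2
      simp only [map_zero, Finsupp.coe_zero, Pi.zero_apply] at h2
      exact (mul_eq_zero.mp h2.symm).resolve_left hj
    · intro h
      apply c.toBasis.repr.injective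
      ext j
      rw [map_zero]
      simp only [Finsupp.coe_zero, Pi.zero_apply]
      rw [hdiagB w j]
      by_cases hj : mu j = 0
      · simp [hj]
      · rw [h j hj, mul_zero]
  -- the tensor product basis
  let P : Module.Basis (Fin n × Fin m) ℝ (V ⊗[ℝ] W) := b.toBasis.tensorProduct c.toBasis
  let d : Fin n × Fin m → ℝ := fun p => lam p.1 + mu p.2
  have hd : ∀ p, 0 ≤ d p := fun p => add_nonneg (hlam p.1) (hmu p.2)
  -- eigenvector equations without coercions
  have hAb : ∀ i, A (b i) = lam i • b i := by
    intro i
    show A (hAsym.eigenvectorBasis hn.symm i)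
      = hAsym.eigenvalues hn.symm i • hAsym.eigenvectorBasis hn.symm i
    rw [hAsym.apply_eigenvectorBasis]
    norm_num
  have hBc : ∀ j, B (c j) = mu j • c j := by
    intro j
    show B (hBsym.eigenvectorBasis hm.symm j)
      = hBsym.eigenvalues hm.symm j • hBsym.eigenvectorBasis hm.symm j
    rw [hBsym.apply_eigenvectorBasis]
    norm_num
  -- L acts diagonally on P
  have hLP : ∀ p, L (P p) = d p • P p := by
    intro p
    have hPp : P p = b.toBasis p.1 ⊗ₜ[ℝ] c.toBasis p.2 := Module.Basis.tensorProduct_apply' _ _ _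
    rw [hL, hPp]
    simp only [LinearMap.add_apply, TensorProduct.map_tmul, LinearMap.id_apply,
      OrthonormalBasis.coe_toBasis, hAb, hBc]
    rw [TensorProduct.tmul_smul, TensorProduct.smul_tmul', ← TensorProduct.add_tmul, ← add_smul,
      TensorProduct.smul_tmul']
  -- coordinates of L x
  have hreprL : ∀ (x : V ⊗[ℝ] W) p, P.repr (L x) p = d p * P.repr x p := by
    intro x p
    conv_lhs => rw [← P.sum_repr x]
    rw [map_sum, map_sum]
    simp only [map_smul, hLP, Module.Basis.repr_self, Finsupp.smul_single]
    rw [Finsupp.finset_sum_apply]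
    simp only [Finsupp.single_apply, smul_eq_mul]
    rw [Finset.sum_ite_eq' Finset.univ p]
    simp [mul_comm]
  -- Φ in coordinates
  have hΦP : ∀ p q, Φ (P p) (P q) = if p = q then 1 else 0 := by
    intro p q
    rw [hΦ, Module.Basis.tensorProduct_apply', Module.Basis.tensorProduct_apply']
    rw [LinearMap.BilinForm.tensorDistrib_tmul]
    simp only [OrthonormalBasis.coe_toBasis, innerₗ_apply_apply, smul_eq_mul]
    rw [orthonormal_iff_ite.mp b.orthonormal, orthonormal_iff_ite.mp c.orthonormal]
    rcases eq_or_ne p q with rfl | hpq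
    · simp
    · rw [if_neg hpq]
      by_cases h1 : p.1 = q.1
      · have h2 : p.2 ≠ q.2 := fun h2 => hpq (Prod.ext h1 h2)
        rw [if_neg h2, zero_mul]
      · rw [if_neg h1, mul_zero]
  have hΦrepr : ∀ x y : V ⊗[ℝ] W, Φ x y = ∑ p, P.repr x p * P.repr y p := by
    intro x y
    conv_lhs => rw [← P.sum_repr x, ← P.sum_repr y]
    simp only [map_sum, map_smul, LinearMap.sum_apply, LinearMap.smul_apply, smul_eq_mul, hΦP,
      mul_ite, mul_one, mul_zero]
    simp only [Finset.sum_ite_eq', Finset.sum_ite_eq, Finset.mem_univ, if_true]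
    exact Finset.sum_congr rfl fun p _ => mul_comm _ _
  -- positivity
  have hpos : ∀ x : V ⊗[ℝ] W, 0 ≤ Φ (L x) x := by
    intro x
    rw [hΦrepr]
    refine Finset.sum_nonneg fun p _ => ?_
    rw [hreprL]
    have : 0 ≤ (P.repr x p) ^ 2 := sq_nonneg _
    calc (0:ℝ) ≤ d p * (P.repr x p) ^ 2 := mul_nonneg (hd p) this
    _ = d p * P.repr x p * P.repr x p := by ring
  refine ⟨hpos, ?_⟩
  -- kernel of L in coordinates
  have hkerL : ∀ x : V ⊗[ℝ] W, x ∈ LinearMap.ker L ↔ ∀ p, d p ≠ 0 → P.repr x p = 0 := by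
    intro x
    rw [LinearMap.mem_ker]
    constructor
    · intro hx p hp
      have h2 := hreprL x p
      rw [hx] at h2
      simp only [map_zero, Finsupp.coe_zero, Pi.zero_apply] at h2
      exact (mul_eq_zero.mp h2.symm).resolve_left hp
    · intro h
      apply P.repr.injective
      ext p
      rw [map_zero]
      simp only [Finsupp.coe_zero, Pi.zero_apply]
      rw [hreprL x p]
      by_cases hp : d p = 0
      · simp [hp]
      · rw [h p hp, mul_zero]
  -- d p = 0 iff both eigenvalues vanish
  have hd0 : ∀ p, d p = 0 ↔ lam p.1 = 0 ∧ mu p.2 = 0 := by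
    intro p
    constructor
    · intro h
      have h' : lam p.1 + mu p.2 = 0 := h
      constructor
      · linarith [hlam p.1, hmu p.2]
      · linarith [hlam p.1, hmu p.2]
    · rintro ⟨h1, h2⟩
      show lam p.1 + mu p.2 = 0
      rw [h1, h2, add_zero]
  set S : Set (Fin n × Fin m) := {p | d p = 0} with hS
  -- ker L = span of basis vectors in S
  have hkspan : LinearMap.ker L = Submodule.span ℝ (P '' S) := by
    ext x
    rw [hkerL, Module.Basis.mem_span_image]
    constructor
    · intro h p hp
      by_contra hpS
      exact (Finsupp.mem_support_iff.mp hp) (h p hpS)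
    · intro h p hp
      by_contra hne
      exact hp (h (Finsupp.mem_support_iff.mpr hne))
  rw [hkspan]
  -- range = span
  apply le_antisymm
  · rw [Submodule.span_le]
    rintro _ ⟨p, hp, rfl⟩
    rw [hS, Set.mem_setOf_eq, hd0] at hp
    have hb : b p.1 ∈ LinearMap.ker A := by
      rw [LinearMap.mem_ker, hAb, hp.1, zero_smul]
    have hc : c p.2 ∈ LinearMap.ker B := by
      rw [LinearMap.mem_ker, hBc, hp.2, zero_smul]
    refine ⟨(⟨b p.1, hb⟩ : LinearMap.ker A) ⊗ₜ[ℝ] (⟨c p.2, hc⟩ : LinearMap.ker B), ?_⟩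
    rw [TensorProduct.map_tmul, Module.Basis.tensorProduct_apply']
    simp [Submodule.subtype_apply, OrthonormalBasis.coe_toBasis]
  · rintro x ⟨z, rfl⟩
    induction z using TensorProduct.induction_on with
    | zero => simp
    | tmul v w =>
      rcases v with ⟨v, hv⟩
      rcases w with ⟨w, hw⟩
      rw [TensorProduct.map_tmul]
      simp only [Submodule.subtype_apply]
      have hvw : v ⊗ₜ[ℝ] w
          = ∑ i, ∑ j, (b.toBasis.repr v i • b.toBasis i) ⊗ₜ[ℝ] (c.toBasis.repr w j • c.toBasis j) := by
        conv_lhs => rw [← b.toBasis.sum_repr v, ← c.toBasis.sum_repr w]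
        rw [TensorProduct.sum_tmul]
        exact Finset.sum_congr rfl fun i _ => TensorProduct.tmul_sum _ _ _
      rw [hvw]
      refine Submodule.sum_mem _ fun i _ => ?_
      refine Submodule.sum_mem _ fun j _ => ?_
      rw [TensorProduct.tmul_smul, ← TensorProduct.smul_tmul']
      by_cases hi : lam i = 0
      · by_cases hj : mu j = 0
        · refine Submodule.smul_mem _ _ (Submodule.smul_mem _ _ ?_)
          apply Submodule.subset_span
          refine ⟨(i, j), ?_, ?_⟩
          · rw [hS, Set.mem_setOf_eq, hd0]; exact ⟨hi, hj⟩
          · exact Module.Basis.tensorProduct_apply _ _ _ _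
        · rw [(hkerB w).mp hw j hj]
          simp
      · rw [(hkerA v).mp hv i hi]
        simp
    | add y z hy hz =>
      rw [map_add]
      exact Submodule.add_mem _ hy hz
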